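/- Let N ≥ 2, β ∈ (1/(2N−1), 1/N), and suppose n ∈ ℕ and β < α_n, where α_n is the unique base in (1/(2N−1),1) whose quasi-greedy expansion of 1 with digit set {0,…,2N−2} is (N(N−1)^{n−1})^∞. Let v = N(N−1)^{n−1} and v̄ = (N−2)(N−1)^{n−1} be blocks of length n. Then every sequence in ∏_{ℓ=1}^∞ {v, v̄} ⊆ {0,…,2N−2}^ℕ satisfies: for all k ≥ 1, ε_{k+1}ε_{k+2}… < δ_1δ_2… whenever ε_k < 2N−2, and (2N−2−ε_{k+1})(2N−2−ε_{k+2})… < δ_1δ_2… whenever ε_k > 0, where (δ_ℓ) is the quasi-greedy β-expansion of 1 with digit set {0,…,2N−2}. -/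

import Mathlib

set_option maxHeartbeats 1000000


def LexLt (a b : ℕ → ℕ) : Prop := ∃ n, (∀ m < n, a m = b m) ∧ a n < b n

def LexLe (a b : ℕ → ℕ) : Prop := a = b ∨ LexLt a b

def IsExpansionOf1 (m : ℕ) (β : ℝ) (d : ℕ → ℕ) : Prop :=
  (∀ n, d n < m) ∧ (∑' n, (d n : ℝ) * β ^ (n + 1)) = 1

def IsInfiniteExp (d : ℕ → ℕ) : Prop := ∀ n, ∃ k ≥ n, d k ≠ 0

def IsQuasiGreedy (m : ℕ) (β : ℝ) (d : ℕ → ℕ) : Prop :=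
  IsExpansionOf1 m β d ∧ IsInfiniteExp d ∧
    ∀ e, IsExpansionOf1 m β e → IsInfiniteExp e → LexLe e d

theorem LexLt.trans {a b c : ℕ → ℕ} (h1 : LexLt a b) (h2 : LexLt b c) : LexLt a c := by
  obtain ⟨j, hj1, hj2⟩ := h1
  obtain ⟨k, hk1, hk2⟩ := h2
  refine ⟨min j k, fun m hm => ?_, ?_⟩
  · rw [hj1 m (lt_of_lt_of_le hm (min_le_left _ _)),
      hk1 m (lt_of_lt_of_le hm (min_le_right _ _))]
  · rcases lt_trichotomy j k with h | h | h
    · rw [min_eq_left h.le, ← hk1 j h]; exact hj2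
    · subst h; rw [min_self]; exact hj2.trans hk2
    · rw [min_eq_right h.le, hj1 k h]; exact hk2

theorem LexLe.trans_lt {a b c : ℕ → ℕ} (h1 : LexLe a b) (h2 : LexLt b c) : LexLt a c := by
  rcases h1 with rfl | h1
  · exact h2
  · exact h1.trans h2

theorem lexle_of_forall_le {a b : ℕ → ℕ} (h : ∀ i, a i ≤ b i) : LexLe a b := by
  by_cases heq : a = b
  · exact Or.inl heq
  · right
    have hex : ∃ i, a i ≠ b i := by
      by_contra hc; push_neg at hc; exact heq (funext hc)
    refine ⟨Nat.find hex, fun m hm => ?_, ?_⟩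
    · exact not_ne_iff.mp (Nat.find_min hex hm)
    · exact lt_of_le_of_ne (h _) (Nat.find_spec hex)

theorem summable_digits {e : ℕ → ℕ} {C : ℝ} (h : ∀ i, (e i : ℝ) ≤ C)
    {x : ℝ} (hx0 : 0 ≤ x) (hx1 : x < 1) :
    Summable (fun i => (e i : ℝ) * x ^ (i + 1)) := by
  refine Summable.of_nonneg_of_le (fun i => by positivity) (fun i => ?_)
    (((summable_geometric_of_lt_one hx0 hx1).mul_left (C * x)))
  calc (e i : ℝ) * x ^ (i + 1) ≤ C * x ^ (i + 1) :=
        mul_le_mul_of_nonneg_right (h i) (pow_nonneg hx0 _)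
    _ = C * x * x ^ i := by rw [pow_succ]; ring

theorem tsum_tail_upper {e : ℕ → ℕ} {x : ℝ} (hx0 : 0 < x) (hx1 : x < 1)
    {C : ℝ} (h : ∀ i, (e i : ℝ) ≤ C) (K : ℕ) :
    ∑' i, (e (i + K) : ℝ) * x ^ (i + K + 1) ≤ C * x ^ (K + 1) / (1 - x) := by
  have hgeo := summable_geometric_of_lt_one hx0.le hx1
  have hs : Summable (fun i => (e (i + K) : ℝ) * x ^ (i + K + 1)) :=
    (summable_nat_add_iff K).mpr (summable_digits h hx0.le hx1)
  have hle : ∀ i, (e (i + K) : ℝ) * x ^ (i + K + 1) ≤ C * x ^ (K + 1) * x ^ i := by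
    intro i
    have hC0 : 0 ≤ C := le_trans (Nat.cast_nonneg _) (h 0)
    calc (e (i + K) : ℝ) * x ^ (i + K + 1) ≤ C * x ^ (i + K + 1) :=
          mul_le_mul_of_nonneg_right (h _) (pow_nonneg hx0.le _)
      _ = C * x ^ (K + 1) * x ^ i := by rw [show i + K + 1 = (K + 1) + i by omega, pow_add]; ring
  calc ∑' i, (e (i + K) : ℝ) * x ^ (i + K + 1)
      ≤ ∑' i, C * x ^ (K + 1) * x ^ i :=
        Summable.tsum_le_tsum hle hs (hgeo.mul_left _)
    _ = C * x ^ (K + 1) * (1 - x)⁻¹ := by rw [tsum_mul_left, tsum_geometric_of_lt_one hx0.le hx1]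
    _ = C * x ^ (K + 1) / (1 - x) := by rw [div_eq_mul_inv]

theorem tsum_tail_lower {e : ℕ → ℕ} {x : ℝ} (hx0 : 0 < x) (hx1 : x < 1)
    {c C : ℝ} (hc : ∀ i, c ≤ (e i : ℝ)) (h : ∀ i, (e i : ℝ) ≤ C) (K : ℕ) :
    c * x ^ (K + 1) / (1 - x) ≤ ∑' i, (e (i + K) : ℝ) * x ^ (i + K + 1) := by
  have hgeo := summable_geometric_of_lt_one hx0.le hx1
  have hs : Summable (fun i => (e (i + K) : ℝ) * x ^ (i + K + 1)) :=
    (summable_nat_add_iff K).mpr (summable_digits h hx0.le hx1)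
  have hle : ∀ i, c * x ^ (K + 1) * x ^ i ≤ (e (i + K) : ℝ) * x ^ (i + K + 1) := by
    intro i
    calc c * x ^ (K + 1) * x ^ i
        = c * x ^ (i + K + 1) := by rw [show i + K + 1 = (K + 1) + i by omega, pow_add]; ring
      _ ≤ (e (i + K) : ℝ) * x ^ (i + K + 1) :=
          mul_le_mul_of_nonneg_right (hc _) (pow_nonneg hx0.le _)
  calc c * x ^ (K + 1) / (1 - x)
      = c * x ^ (K + 1) * (1 - x)⁻¹ := by rw [div_eq_mul_inv]
    _ = ∑' i, c * x ^ (K + 1) * x ^ i := by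
        rw [tsum_mul_left, tsum_geometric_of_lt_one hx0.le hx1]
    _ ≤ _ := Summable.tsum_le_tsum hle (hgeo.mul_left _) hs

theorem stmt18 (N n : ℕ) (hN : 2 ≤ N) (hn : 1 ≤ n) (β α : ℝ)
    (hβ1 : 1 / (2 * (N : ℝ) - 1) < β) (hβ2 : β < 1 / (N : ℝ))
    (hα1 : 1 / (2 * (N : ℝ) - 1) < α) (hα2 : α < 1)
    (hαqg : IsQuasiGreedy (2 * N - 1) α (fun i => if i % n = 0 then N else N - 1))
    (hαuniq : ∀ α' : ℝ, 1 / (2 * (N : ℝ) - 1) < α' → α' < 1 →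
      IsQuasiGreedy (2 * N - 1) α' (fun i => if i % n = 0 then N else N - 1) → α' = α)
    (hβα : β < α)
    (δ : ℕ → ℕ) (hδ : IsQuasiGreedy (2 * N - 1) β δ)
    (ε : ℕ → ℕ) (b : ℕ → Bool)
    (hε : ∀ i, ε i = if i % n = 0 then (if b (i / n) then N else N - 2) else N - 1) :
    ∀ k : ℕ, (ε k < 2 * N - 2 → LexLt (fun i => ε (k + 1 + i)) δ) ∧
             (0 < ε k → LexLt (fun i => 2 * N - 2 - ε (k + 1 + i)) δ) := by
  have hNR : (2 : ℝ) ≤ N := by exact_mod_cast hN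
  have h2N1 : (0 : ℝ) < 2 * (N : ℝ) - 1 := by linarith
  have hβ0 : 0 < β := lt_trans (one_div_pos.mpr h2N1) hβ1
  have hα0 : 0 < α := lt_trans (one_div_pos.mpr h2N1) hα1
  have hβlt1 : β < 1 := lt_trans hβ2 (by rw [div_lt_one (by linarith)]; linarith)
  set d : ℕ → ℕ := fun i => if i % n = 0 then N else N - 1 with hd
  have hdN : ∀ i, d i ≤ N := by intro i; simp only [hd]; split <;> omega
  have hdN' : ∀ i, N - 1 ≤ d i := by intro i; simp only [hd]; split <;> omega
  have hδle : ∀ i, (δ i : ℝ) ≤ 2 * (N : ℝ) - 2 := by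
    intro i
    have h1 : δ i ≤ 2 * N - 2 := by have := hδ.1.1 i; omega
    have h2 : ((2 * N - 2 : ℕ) : ℝ) = 2 * (N : ℝ) - 2 := by
      have : 2 ≤ 2 * N := by omega
      push_cast [this]; ring
    calc (δ i : ℝ) ≤ ((2 * N - 2 : ℕ) : ℝ) := Nat.cast_le.mpr h1
      _ = _ := h2
  have hdleR : ∀ i, (d i : ℝ) ≤ 2 * (N : ℝ) - 2 := by
    intro i
    calc (d i : ℝ) ≤ (N : ℝ) := Nat.cast_le.mpr (hdN i)
      _ ≤ 2 * (N : ℝ) - 2 := by linarith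
  have hdgeR : ∀ i, (N : ℝ) - 1 ≤ (d i : ℝ) := by
    intro i
    have h2 : ((N - 1 : ℕ) : ℝ) = (N : ℝ) - 1 := by
      have : 1 ≤ N := by omega
      push_cast [this]; ring
    calc (N : ℝ) - 1 = ((N - 1 : ℕ) : ℝ) := h2.symm
      _ ≤ (d i : ℝ) := Nat.cast_le.mpr (hdN' i)
  have hsδβ : Summable (fun i => (δ i : ℝ) * β ^ (i + 1)) := summable_digits hδle hβ0.le hβlt1
  have hsdβ : Summable (fun i => (d i : ℝ) * β ^ (i + 1)) := summable_digits hdleR hβ0.le hβlt1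
  have hsdα : Summable (fun i => (d i : ℝ) * α ^ (i + 1)) := summable_digits hdleR hα0.le hα2
  -- the value of d in base β is < 1
  have hvd : (∑' i, (d i : ℝ) * β ^ (i + 1)) < 1 := by
    have h1 : (∑' i, (d i : ℝ) * α ^ (i + 1)) = 1 := hαqg.1.2
    rw [← h1]
    refine Summable.tsum_lt_tsum (fun i => ?_) (i := 0) ?_ hsdβ hsdα
    · exact mul_le_mul_of_nonneg_left (pow_le_pow_left₀ hβ0.le hβα.le _) (Nat.cast_nonneg _)
    · have hd0 : d 0 = N := by simp [hd]
      rw [hd0, pow_one, pow_one]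
      exact mul_lt_mul_of_pos_left hβα (by linarith)
  -- d < δ lexicographically
  have hdδ : LexLt d δ := by
    by_contra hc
    have hne : d ≠ δ := by
      rintro rfl
      rw [hδ.1.2] at hvd
      exact lt_irrefl _ hvd
    have hex : ∃ i, d i ≠ δ i := by
      by_contra h; push_neg at h; exact hne (funext h)
    set k := Nat.find hex with hk
    have hagree : ∀ m < k, d m = δ m := fun m hm => not_ne_iff.mp (Nat.find_min hex hm)
    have hneq : d k ≠ δ k := Nat.find_spec hex
    have hlt : δ k < d k := by
      rcases Nat.lt_or_ge (d k) (δ k) with h | h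
      · exact absurd ⟨k, hagree, h⟩ hc
      · omega
    -- analytic contradiction
    have hsplitf := Summable.sum_add_tsum_nat_add (f := fun i => (δ i : ℝ) * β ^ (i + 1)) (k + 1) hsδβ
    have hsplitg := Summable.sum_add_tsum_nat_add (f := fun i => (d i : ℝ) * β ^ (i + 1)) (k + 1) hsdβ
    rw [hδ.1.2] at hsplitf
    have hPpos : (0 : ℝ) < β ^ (k + 1) := pow_pos hβ0 _
    have hpre : (∑ i ∈ Finset.range (k + 1), (δ i : ℝ) * β ^ (i + 1)) + β ^ (k + 1) ≤
        ∑ i ∈ Finset.range (k + 1), (d i : ℝ) * β ^ (i + 1) := by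
      rw [Finset.sum_range_succ, Finset.sum_range_succ]
      have hsum_eq : (∑ i ∈ Finset.range k, (δ i : ℝ) * β ^ (i + 1)) =
          ∑ i ∈ Finset.range k, (d i : ℝ) * β ^ (i + 1) := by
        refine Finset.sum_congr rfl (fun i hi => ?_)
        rw [hagree i (Finset.mem_range.mp hi)]
      have hδk : (δ k : ℝ) + 1 ≤ (d k : ℝ) := by exact_mod_cast hlt
      nlinarith [hPpos]
    have htf : (∑' i, (δ (i + (k + 1)) : ℝ) * β ^ (i + (k + 1) + 1)) ≤
        (2 * (N : ℝ) - 2) * β ^ (k + 1 + 1) / (1 - β) :=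
      tsum_tail_upper hβ0 hβlt1 hδle (k + 1)
    have htg : ((N : ℝ) - 1) * β ^ (k + 1 + 1) / (1 - β) ≤
        ∑' i, (d (i + (k + 1)) : ℝ) * β ^ (i + (k + 1) + 1) :=
      tsum_tail_lower hβ0 hβlt1 hdgeR hdleR (k + 1)
    have h1β : (0 : ℝ) < 1 - β := by linarith
    have hNβ : (N : ℝ) * β < 1 := by
      have h := (lt_div_iff₀ (by linarith : (0 : ℝ) < (N : ℝ))).mp hβ2
      linarith
    have hkey : ((N : ℝ) - 1) * β ^ (k + 1 + 1) / (1 - β) < β ^ (k + 1) := by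
      rw [div_lt_iff₀ h1β]
      have hps : β ^ (k + 1 + 1) = β ^ (k + 1) * β := pow_succ _ _
      nlinarith [hPpos]
    have hsplit2 : (2 * (N : ℝ) - 2) * β ^ (k + 1 + 1) / (1 - β) =
        2 * (((N : ℝ) - 1) * β ^ (k + 1 + 1) / (1 - β)) := by ring
    -- combine everything
    rw [hsplit2] at htf
    linarith [hvd, hsplitf, hsplitg, hpre, htf, htg, hkey]
  -- combinatorial part
  have hcomb : ∀ (e : ℕ → ℕ), (∀ i, i % n = 0 → e i ≤ N) → (∀ i, i % n ≠ 0 → e i = N - 1) →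
      ∀ j, LexLt (fun i => e (j + i)) δ := by
    intro e he0 he1 j
    by_cases hj : j % n = 0
    · refine LexLe.trans_lt (b := d) ?_ hdδ
      apply lexle_of_forall_le
      intro i
      have hmod : (j + i) % n = i % n := by
        conv_lhs => rw [Nat.add_mod, hj]
        simp [Nat.mod_mod_of_dvd]
      by_cases hi : i % n = 0
      · have h1 := he0 (j + i) (by rw [hmod]; exact hi)
        simp only [hd, hi, if_pos]
        exact h1
      · have h1 := he1 (j + i) (by rw [hmod]; exact hi)
        simp only [hd, if_neg hi]
        omega
    · refine LexLt.trans (b := d) ?_ hdδ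
      refine ⟨0, fun m hm => absurd hm (Nat.not_lt_zero m), ?_⟩
      have h1 : e (j + 0) = N - 1 := he1 _ (by simpa using hj)
      have h2 : d 0 = N := by simp [hd]
      simp only [h1, h2]
      omega
  intro k
  constructor
  · intro _
    exact hcomb ε
      (fun i hi => by rw [hε i, if_pos hi]; split <;> omega)
      (fun i hi => by rw [hε i, if_neg hi]) (k + 1)
  · intro _
    exact hcomb (fun i => 2 * N - 2 - ε i)
      (fun i hi => by show 2 * N - 2 - ε i ≤ N; rw [hε i, if_pos hi]; split <;> omega)
      (fun i hi => by show 2 * N - 2 - ε i = N - 1; rw [hε i, if_neg hi]; omega) (k + 1)
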